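/- (Theorem 3 of the paper: finite sample size control.) Under Assumption 1, for any α ∈ (0,1), ℙ(T_n(β) ≤ q_{1−α}) ≥ 1 − α, where q_{1−α} = inf{c ∈ ℝ : ℙ(T*_n(β) ≤ c) ≥ 1 − α} is the (1−α)-quantile of T*_n(β). -/

import Mathlib

open MeasureTheory ProbabilityTheory

/-- Sample upper moment `m̂_u(b,v)` computed from outcomes `y`. -/
noncomputable def muHatU {n K : ℕ} (X : Fin n → Fin K → ℝ) (b v : Fin K → ℝ)
    (y : Fin n → ℝ) : ℝ :=
  (n : ℝ)⁻¹ * ∑ i, (2 * y i - 1) *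
    (if 0 ≤ (∑ j, X i j * b j) ∧ (∑ j, X i j * v j) < 0 then 1 else 0)

/-- Sample lower moment `m̂_l(b,v)` computed from outcomes `y`. -/
noncomputable def muHatL {n K : ℕ} (X : Fin n → Fin K → ℝ) (b v : Fin K → ℝ)
    (y : Fin n → ℝ) : ℝ :=
  (n : ℝ)⁻¹ * ∑ i, (1 - 2 * y i) *
    (if (∑ j, X i j * b j) ≤ 0 ∧ 0 < (∑ j, X i j * v j) then 1 else 0)

/-- Sample variance `σ̂_u²(b,v)`. -/
noncomputable def sigHatU2 {n K : ℕ} (X : Fin n → Fin K → ℝ) (b v : Fin K → ℝ)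
    (y : Fin n → ℝ) : ℝ :=
  (n : ℝ)⁻¹ * (∑ i, (if 0 ≤ (∑ j, X i j * b j) ∧ (∑ j, X i j * v j) < 0
      then (1:ℝ) else 0)) - (muHatU X b v y) ^ 2

/-- Sample variance `σ̂_l²(b,v)`. -/
noncomputable def sigHatL2 {n K : ℕ} (X : Fin n → Fin K → ℝ) (b v : Fin K → ℝ)
    (y : Fin n → ℝ) : ℝ :=
  (n : ℝ)⁻¹ * (∑ i, (if (∑ j, X i j * b j) ≤ 0 ∧ 0 < (∑ j, X i j * v j)
      then (1:ℝ) else 0)) - (muHatL X b v y) ^ 2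

/-- The test statistic `T_n(b)` computed from outcomes `y`. -/
noncomputable def Tstat {n K : ℕ} (X : Fin n → Fin K → ℝ)
    (Vu Vl : Finset (Fin K → ℝ)) (hu : Vu.Nonempty) (hl : Vl.Nonempty)
    (ε : ℝ) (b : Fin K → ℝ) (y : Fin n → ℝ) : ℝ :=
  max 0 (max
    (Vu.sup' hu fun v =>
      Real.sqrt n * (-(muHatU X b v y)) /
        max (Real.sqrt (sigHatU2 X b v y)) ε)
    (Vl.sup' hl fun v =>
      Real.sqrt n * (-(muHatL X b v y)) /
        max (Real.sqrt (sigHatL2 X b v y)) ε))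

-- test pointwise lemma
section
variable {n K : ℕ} (X : Fin n → Fin K → ℝ) (β : Fin K → ℝ)

lemma muHatU_mono (v : Fin K → ℝ) (y z : Fin n → ℝ)
    (h : ∀ i, 0 ≤ ∑ j, X i j * β j → z i ≤ y i) :
    muHatU X β v z ≤ muHatU X β v y := by
  unfold muHatU
  apply mul_le_mul_of_nonneg_left _ (by positivity)
  apply Finset.sum_le_sum
  intro i _
  by_cases hi : 0 ≤ (∑ j, X i j * β j) ∧ (∑ j, X i j * v j) < 0
  · rw [if_pos hi, mul_one, mul_one]
    linarith [h i hi.1]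
  · simp [hi]

lemma muHatL_mono (v : Fin K → ℝ) (y z : Fin n → ℝ)
    (h : ∀ i, (∑ j, X i j * β j) ≤ 0 → y i ≤ z i) :
    muHatL X β v z ≤ muHatL X β v y := by
  unfold muHatL
  apply mul_le_mul_of_nonneg_left _ (by positivity)
  apply Finset.sum_le_sum
  intro i _
  by_cases hi : (∑ j, X i j * β j) ≤ 0 ∧ 0 < (∑ j, X i j * v j)
  · rw [if_pos hi, mul_one, mul_one]
    linarith [h i hi.1]
  · simp [hi]

lemma Tstat_mono (Vu Vl : Finset (Fin K → ℝ)) (hu : Vu.Nonempty) (hl : Vl.Nonempty)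
    {ε : ℝ} (hε : 0 < ε) (y z : Fin n → ℝ)
    (h1 : ∀ i, 0 ≤ ∑ j, X i j * β j → z i ≤ y i)
    (h2 : ∀ i, (∑ j, X i j * β j) ≤ 0 → y i ≤ z i) :
    Tstat X Vu Vl hu hl ε β y ≤ Tstat X Vu Vl hu hl ε β z := by
  unfold Tstat
  apply max_le (le_max_left 0 _)
  apply max_le <;> apply Finset.sup'_le <;> intro v hv
  · set m := muHatU X β v y with hm
    set m' := muHatU X β v z with hm'
    have hmm : m' ≤ m := muHatU_mono X β v y z h1
    rcases le_or_gt (-m) 0 with h0 | h0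
    · refine le_trans ?_ (le_max_left 0 _)
      apply div_nonpos_of_nonpos_of_nonneg
      · exact mul_nonpos_of_nonneg_of_nonpos (Real.sqrt_nonneg _) h0
      · exact le_of_lt (lt_of_lt_of_le hε (le_max_right _ _))
    · have hsig : sigHatU2 X β v z ≤ sigHatU2 X β v y := by
        unfold sigHatU2
        rw [← hm, ← hm']
        nlinarith
      have hd : max (Real.sqrt (sigHatU2 X β v z)) ε
          ≤ max (Real.sqrt (sigHatU2 X β v y)) ε :=
        max_le_max (Real.sqrt_le_sqrt hsig) le_rfl
      have hd0 : 0 < max (Real.sqrt (sigHatU2 X β v z)) ε :=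
        lt_of_lt_of_le hε (le_max_right _ _)
      refine le_trans ?_ (le_trans (le_trans (Finset.le_sup' (f := fun v =>
        Real.sqrt n * (-(muHatU X β v z)) / max (Real.sqrt (sigHatU2 X β v z)) ε) hv)
        (le_max_left _ _)) (le_max_right 0 _))
      exact div_le_div₀ (mul_nonneg (Real.sqrt_nonneg _) (by linarith))
        (mul_le_mul_of_nonneg_left (by linarith) (Real.sqrt_nonneg _)) hd0 hd
  · set m := muHatL X β v y with hm
    set m' := muHatL X β v z with hm'
    have hmm : m' ≤ m := muHatL_mono X β v y z h2
    rcases le_or_gt (-m) 0 with h0 | h0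
    · refine le_trans ?_ (le_max_left 0 _)
      apply div_nonpos_of_nonpos_of_nonneg
      · exact mul_nonpos_of_nonneg_of_nonpos (Real.sqrt_nonneg _) h0
      · exact le_of_lt (lt_of_lt_of_le hε (le_max_right _ _))
    · have hsig : sigHatL2 X β v z ≤ sigHatL2 X β v y := by
        unfold sigHatL2
        rw [← hm, ← hm']
        nlinarith
      have hd : max (Real.sqrt (sigHatL2 X β v z)) ε
          ≤ max (Real.sqrt (sigHatL2 X β v y)) ε :=
        max_le_max (Real.sqrt_le_sqrt hsig) le_rfl
      have hd0 : 0 < max (Real.sqrt (sigHatL2 X β v z)) ε :=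
        lt_of_lt_of_le hε (le_max_right _ _)
      refine le_trans ?_ (le_trans (le_trans (Finset.le_sup' (f := fun v =>
        Real.sqrt n * (-(muHatL X β v z)) / max (Real.sqrt (sigHatL2 X β v z)) ε) hv)
        (le_max_right _ _)) (le_max_right 0 _))
      exact div_le_div₀ (mul_nonneg (Real.sqrt_nonneg _) (by linarith))
        (mul_le_mul_of_nonneg_left (by linarith) (Real.sqrt_nonneg _)) hd0 hd
lemma Tstat_measurable (Vu Vl : Finset (Fin K → ℝ)) (hu : Vu.Nonempty) (hl : Vl.Nonempty)
    (ε : ℝ) : Measurable (fun y : Fin n → ℝ => Tstat X Vu Vl hu hl ε β y) := by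
  have hmU : ∀ v, Measurable (fun y : Fin n → ℝ => muHatU X β v y) := by
    intro v; unfold muHatU
    exact (Finset.measurable_sum _ fun i _ =>
      (((measurable_pi_apply i).const_mul 2).sub measurable_const).mul
        measurable_const).const_mul _
  have hmL : ∀ v, Measurable (fun y : Fin n → ℝ => muHatL X β v y) := by
    intro v; unfold muHatL
    exact (Finset.measurable_sum _ fun i _ =>
      (measurable_const.sub ((measurable_pi_apply i).const_mul 2)).mul
        measurable_const).const_mul _
  have hsU : ∀ v, Measurable (fun y : Fin n → ℝ => sigHatU2 X β v y) := by
    intro v; unfold sigHatU2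
    exact measurable_const.sub ((hmU v).pow_const 2)
  have hsL : ∀ v, Measurable (fun y : Fin n → ℝ => sigHatL2 X β v y) := by
    intro v; unfold sigHatL2
    exact measurable_const.sub ((hmL v).pow_const 2)
  unfold Tstat
  apply measurable_const.max
  apply Measurable.max
  · have := Finset.measurable_sup' hu (fun v (_ : v ∈ Vu) =>
      ((((hmU v).neg).const_mul (Real.sqrt n)).div
        (((hsU v).sqrt).max measurable_const) :
        Measurable fun y : Fin n → ℝ =>
          Real.sqrt n * (-(muHatU X β v y)) / max (Real.sqrt (sigHatU2 X β v y)) ε))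
    convert this using 1
    funext a
    simp [Finset.sup'_apply]
  · have := Finset.measurable_sup' hl (fun v (_ : v ∈ Vl) =>
      ((((hmL v).neg).const_mul (Real.sqrt n)).div
        (((hsL v).sqrt).max measurable_const) :
        Measurable fun y : Fin n → ℝ =>
          Real.sqrt n * (-(muHatL X β v y)) / max (Real.sqrt (sigHatL2 X β v y)) ε))
    convert this using 1
    funext a
    simp [Finset.sup'_apply]
end
/-- Theorem 3: finite sample size control. Under Assumption 1 and `H₀ : β = b`,
`P(T_n(β) ≤ q_{1−α}) ≥ 1 − α`, where `q_{1−α}` is the `(1−α)`-quantile of `T*_n(β)`. -/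
theorem theorem3_size_control
    {Ω : Type*} [MeasurableSpace Ω] (P : Measure Ω) [IsProbabilityMeasure P]
    {n K : ℕ} (hn : 1 ≤ n) (hK : 1 ≤ K)
    (X : Fin n → Fin K → ℝ) (β : Fin K → ℝ)
    (U : Fin n → Ω → ℝ) (hU : ∀ i, Measurable (U i))
    (Y : Fin n → Ω → ℝ)
    (hY : ∀ i ω, Y i ω = if 0 ≤ (∑ j, X i j * β j) + U i ω then 1 else 0)
    (hmed : ∀ i, P {ω | 0 ≤ U i ω} = 1/2)
    (hindep : iIndepFun
      (fun i ω => if 0 ≤ U i ω then (1 : ℝ) else 0) P)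
    (ε : ℝ) (hε : 0 < ε)
    (Vu Vl : Finset (Fin K → ℝ)) (hu : Vu.Nonempty) (hl : Vl.Nonempty)
    (α : ℝ) (hα : α ∈ Set.Ioo (0 : ℝ) 1)
    (q : ℝ)
    (hq : q = sInf {c : ℝ | 1 - α ≤
      (P {ω | Tstat X Vu Vl hu hl ε β
          (fun i => if 0 ≤ U i ω then 1 else 0) ≤ c}).toReal}) :
    1 - α ≤ (P {ω | Tstat X Vu Vl hu hl ε β (fun i => Y i ω) ≤ q}).toReal := by
  classical
  subst hq
  set Ys : Ω → Fin n → ℝ := fun ω i => if 0 ≤ U i ω then (1:ℝ) else 0 with hYs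
  set g : Ω → ℝ := fun ω => Tstat X Vu Vl hu hl ε β (Ys ω) with hg
  have hYsm : Measurable Ys := by
    apply measurable_pi_lambda
    intro i
    exact Measurable.ite (measurableSet_le measurable_const (hU i))
      measurable_const measurable_const
  have hgm : Measurable g := (Tstat_measurable X β Vu Vl hu hl ε).comp hYsm
  set S : Set ℝ := {c : ℝ | 1 - α ≤ (P {ω | g ω ≤ c}).toReal} with hS
  -- g is nonneg
  have hg0 : ∀ ω, 0 ≤ g ω := fun ω => le_max_left 0 _
  -- g is bounded above
  have : Nonempty (Fin n → Bool) := ⟨fun _ => true⟩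
  set M : ℝ := Finset.univ.sup' Finset.univ_nonempty
      (fun s : Fin n → Bool => Tstat X Vu Vl hu hl ε β (fun i => if s i then 1 else 0))
    with hM
  have hgM : ∀ ω, g ω ≤ M := by
    intro ω
    have : Ys ω = fun i => if (fun i => decide (0 ≤ U i ω)) i then (1:ℝ) else 0 := by
      funext i
      by_cases h : 0 ≤ U i ω <;> simp [hYs, h]
    rw [hg]
    simp only [this]
    exact Finset.le_sup' (fun s : Fin n → Bool =>
      Tstat X Vu Vl hu hl ε β (fun i => if s i then 1 else 0))
      (Finset.mem_univ (fun i => decide (0 ≤ U i ω)))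
  have hSne : S.Nonempty := by
    refine ⟨M, ?_⟩
    have : {ω | g ω ≤ M} = Set.univ := Set.eq_univ_of_forall fun ω => hgM ω
    simp only [hS, Set.mem_setOf_eq, this, measure_univ, ENNReal.toReal_one]
    linarith [hα.1]
  have hSbdd : BddBelow S := by
    refine ⟨0, fun c hc => ?_⟩
    by_contra hneg
    push_neg at hneg
    have : {ω | g ω ≤ c} = ∅ := by
      ext ω
      simp only [Set.mem_setOf_eq, Set.mem_empty_iff_false, iff_false, not_le]
      exact lt_of_lt_of_le hneg (hg0 ω)
    simp only [hS, Set.mem_setOf_eq, this, measure_empty, ENNReal.toReal_zero] at hc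
    linarith [hα.2]
  -- S is upward closed
  have hSup : ∀ c d, c ∈ S → c ≤ d → d ∈ S := by
    intro c d hc hcd
    refine le_trans hc (ENNReal.toReal_mono (measure_ne_top _ _) ?_)
    exact measure_mono fun ω h => le_trans h hcd
  set q := sInf S with hq
  -- key : 1 - α ≤ P (g ≤ q)
  have hkey : 1 - α ≤ (P {ω | g ω ≤ q}).toReal := by
    set A : ℕ → Set Ω := fun k => {ω | g ω ≤ q + 1 / (k + 1)} with hA
    have hAm : ∀ k, MeasurableSet (A k) :=
      fun k => hgm measurableSet_Iic
    have hAanti : Antitone A := by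
      intro k l hkl ω hω
      simp only [hA, Set.mem_setOf_eq] at hω ⊢
      have h1 : (1:ℝ)/(l+1) ≤ 1/(k+1) := by
        apply one_div_le_one_div_of_le (by positivity)
        have : (k:ℝ) ≤ l := by exact_mod_cast hkl
        linarith
      linarith
    have hAint : ⋂ k, A k = {ω | g ω ≤ q} := by
      ext ω
      simp only [Set.mem_iInter, hA, Set.mem_setOf_eq]
      constructor
      · intro h
        refine le_of_forall_pos_le_add fun δ hδ => ?_
        obtain ⟨k, hk⟩ := exists_nat_one_div_lt hδ
        exact le_trans (h k) (by linarith)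
      · intro h k
        have : (0:ℝ) < 1 / (k + 1) := by positivity
        linarith
    have hAk : ∀ k, 1 - α ≤ (P (A k)).toReal := by
      intro k
      have hpos : (0:ℝ) < 1 / (k + 1) := by positivity
      have : sInf S < q + 1 / (k + 1) := by rw [← hq]; linarith
      obtain ⟨c, hcS, hc⟩ := exists_lt_of_csInf_lt hSne this
      exact hSup c _ hcS (le_of_lt hc)
    have htend : Filter.Tendsto (fun k => P (A k)) Filter.atTop
        (nhds (P (⋂ k, A k))) :=
      tendsto_measure_iInter_atTop (fun k => (hAm k).nullMeasurableSet) hAanti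
        ⟨0, measure_ne_top _ _⟩
    have htendR : Filter.Tendsto (fun k => (P (A k)).toReal) Filter.atTop
        (nhds ((P (⋂ k, A k)).toReal)) :=
      (ENNReal.tendsto_toReal (measure_ne_top _ _)).comp htend
    rw [← hAint]
    exact ge_of_tendsto' htendR hAk
  -- pointwise : Tstat with Y ≤ g
  refine le_trans hkey (ENNReal.toReal_mono (measure_ne_top _ _) (measure_mono ?_))
  intro ω hω
  refine le_trans (Tstat_mono X β Vu Vl hu hl hε _ (Ys ω) ?_ ?_) hω
  · intro i hXβ
    simp only [hYs, hY i ω]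
    by_cases h : 0 ≤ U i ω
    · have : 0 ≤ (∑ j, X i j * β j) + U i ω := by linarith
      simp [h, this]
    · simp [h]
      positivity
  · intro i hXβ
    simp only [hYs, hY i ω]
    by_cases h : 0 ≤ (∑ j, X i j * β j) + U i ω
    · have : 0 ≤ U i ω := by linarith
      simp [h, this]
    · simp [h]
      positivity
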